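/- Double exchange of jumps: let (Γ, λ) be a proof net with ⊥-occurrences a, b, c, d such that every switching graph contains a path of the form λ(a) –(jump of a)– a – ⋯ – b –(jump of b)– λ(b) – ⋯ – λ(c) –(jump of c)– c – ⋯ – d –(jump of d)– λ(d). Then λ is equivalent (under the rewiring-generated equivalence) to the linking λ[a ↦ λ(b)][b ↦ λ(a)][c ↦ λ(d)][d ↦ λ(c)] obtained by simultaneously swapping the targets of a and b and the targets of c and d. -/

import Mathlib

namespace MLL

/-- Formulas of unit-only MLL, with every connective and unit occurrence
carrying a name (a natural number). -/
inductive Formula : Type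
  | one : ℕ → Formula
  | bot : ℕ → Formula
  | parr : ℕ → Formula → Formula → Formula
  | tens : ℕ → Formula → Formula → Formula
deriving DecidableEq

namespace Formula

/-- The name of the root connective/unit of a formula. -/
def name : Formula → ℕ
  | one n => n
  | bot n => n
  | parr n _ _ => n
  | tens n _ _ => n

/-- All names occurring in a formula. -/
def names : Formula → Finset ℕ
  | one n => {n}
  | bot n => {n}
  | parr n A B => insert n (A.names ∪ B.names)
  | tens n A B => insert n (A.names ∪ B.names)

/-- All subformula occurrences of a formula. -/
def subs : Formula → List Formula
  | one n => [one n]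
  | bot n => [bot n]
  | parr n A B => parr n A B :: (A.subs ++ B.subs)
  | tens n A B => tens n A B :: (A.subs ++ B.subs)

end Formula

/-- A sequent is a multiset of (named) formulas. -/
abbrev Sequent := Multiset Formula

/-- The names occurring in a sequent. -/
def seqNames (Γ : Sequent) : Finset ℕ := (Γ.map Formula.names).sup

/-- The subformula occurrences of a sequent. -/
def seqSubs (Γ : Sequent) : Multiset Formula :=
  Γ.bind (fun A => (A.subs : Multiset Formula))

/-- `A` is a subformula occurrence of `Γ`. -/
def HasSub (Γ : Sequent) (A : Formula) : Prop := A ∈ seqSubs Γ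

/-- `a` is the name of a `⊥`-occurrence of `Γ`. -/
def IsBotName (Γ : Sequent) (a : ℕ) : Prop := HasSub Γ (.bot a)

/-- `a` is the name of a `1`-occurrence of `Γ`. -/
def IsOneName (Γ : Sequent) (a : ℕ) : Prop := HasSub Γ (.one a)

/-- The sequent is well-named: all occurrences carry pairwise distinct names. -/
def WellNamed (Γ : Sequent) : Prop := ((seqSubs Γ).map Formula.name).Nodup

/-- A linking: a function assigning to (the name of) each `⊥`-occurrence
a target name (the jump). -/
abbrev Linking := ℕ → ℕ

/-- A switching: a choice of left/right for each par occurrence. -/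
abbrev Switching := ℕ → Bool

/-- The linking sends (names of) `⊥`-occurrences to names of `Γ`. -/
def ValidLinking (Γ : Sequent) (lk : Linking) : Prop :=
  ∀ a, IsBotName Γ a → lk a ∈ seqNames Γ

/-- The edges of the switching graph for `Γ`, `lk` and the switching `σ`. -/
def switchAdj (Γ : Sequent) (lk : Linking) (σ : Switching) (x y : ℕ) : Prop :=
  (∃ A B, HasSub Γ (.tens x A B) ∧ (y = A.name ∨ y = B.name)) ∨
  (∃ A B, HasSub Γ (.parr x A B) ∧ y = (if σ x then A.name else B.name)) ∨
  (IsBotName Γ x ∧ y = lk x)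

/-- The switching graph for `Γ`, `lk` and `σ`. -/
def switchGraph (Γ : Sequent) (lk : Linking) (σ : Switching) : SimpleGraph ℕ :=
  SimpleGraph.fromRel (switchAdj Γ lk σ)

/-- Correctness of a linking: every switching graph (restricted to the names of `Γ`)
is acyclic and connected, i.e. a tree.  `(Γ, lk)` is a proof net iff `Correct Γ lk`. -/
def Correct (Γ : Sequent) (lk : Linking) : Prop :=
  ValidLinking Γ lk ∧
  ∀ σ : Switching, ((switchGraph Γ lk σ).induce {x : ℕ | x ∈ seqNames Γ}).IsTree

/-- All jumps of the linking target `1`-occurrences. -/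
def TargetsOnes (Γ : Sequent) (lk : Linking) : Prop :=
  ∀ a, IsBotName Γ a → IsOneName Γ (lk a)

/-- Two correct linkings describe the same proof net (they agree on all jumps). -/
def SameNet (Γ : Sequent) (lk lk' : Linking) : Prop :=
  Correct Γ lk ∧ Correct Γ lk' ∧ ∀ a, IsBotName Γ a → lk a = lk' a

/-- A rewiring step between proof nets: the target of exactly one jump is changed. -/
def Rewire (Γ : Sequent) (lk lk' : Linking) : Prop :=
  Correct Γ lk ∧ Correct Γ lk' ∧
  ∃ a, IsBotName Γ a ∧ lk a ≠ lk' a ∧ ∀ b, IsBotName Γ b → b ≠ a → lk b = lk' b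

/-- Equivalence of proof nets over `Γ`: the equivalence relation generated by rewiring. -/
def NetEquiv (Γ : Sequent) : Linking → Linking → Prop :=
  Relation.EqvGen (fun lk lk' => SameNet Γ lk lk' ∨ Rewire Γ lk lk')

end MLL

namespace MLLAux
open MLL SimpleGraph

variable {Γ : Sequent}

lemma name_inj (hW : WellNamed Γ) {A B : Formula} (hA : HasSub Γ A) (hB : HasSub Γ B)
    (h : A.name = B.name) : A = B :=
  Multiset.inj_on_of_nodup_map hW A hA B hB h

lemma bot_ne_one (hW : WellNamed Γ) {x t : ℕ} (hx : IsBotName Γ x) (ht : IsOneName Γ t) :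
    x ≠ t := by
  intro rfl
  exact absurd (name_inj hW hx ht rfl) (by simp)

lemma self_mem_subs (A : Formula) : A ∈ A.subs := by
  cases A <;> simp [Formula.subs]

lemma subs_trans : ∀ (C : Formula) {A B : Formula}, B ∈ C.subs → A ∈ B.subs → A ∈ C.subs := by
  intro C
  induction C with
  | one n => intro A B hB hA; simp [Formula.subs] at hB; subst hB; simpa [Formula.subs] using hA
  | bot n => intro A B hB hA; simp [Formula.subs] at hB; subst hB; simpa [Formula.subs] using hA
  | parr n l r ihl ihr =>
    intro A B hB hA
    simp only [Formula.subs, List.mem_cons, List.mem_append] at hB ⊢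
    rcases hB with rfl | hB | hB
    · simpa [Formula.subs] using hA
    · exact Or.inr (Or.inl (ihl hB hA))
    · exact Or.inr (Or.inr (ihr hB hA))
  | tens n l r ihl ihr =>
    intro A B hB hA
    simp only [Formula.subs, List.mem_cons, List.mem_append] at hB ⊢
    rcases hB with rfl | hB | hB
    · simpa [Formula.subs] using hA
    · exact Or.inr (Or.inl (ihl hB hA))
    · exact Or.inr (Or.inr (ihr hB hA))

lemma hasSub_trans {A B : Formula} (hB : HasSub Γ B) (hA : A ∈ B.subs) : HasSub Γ A := by
  obtain ⟨C, hC, hBC⟩ := Multiset.mem_bind.1 hB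
  exact Multiset.mem_bind.2 ⟨C, hC, by
    have := subs_trans C (by simpa using hBC) hA
    simpa using this⟩

lemma name_mem_names {A B : Formula} (h : A ∈ B.subs) : A.name ∈ B.names := by
  induction B with
  | one n => simp [Formula.subs] at h; subst h; simp [Formula.names, Formula.name]
  | bot n => simp [Formula.subs] at h; subst h; simp [Formula.names, Formula.name]
  | parr n l r ihl ihr =>
    simp only [Formula.subs, List.mem_cons, List.mem_append] at h
    rcases h with rfl | h | h
    · simp [Formula.names, Formula.name]
    · simp only [Formula.names, Finset.mem_insert, Finset.mem_union]
      exact Or.inr (Or.inl (ihl h))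
    · simp only [Formula.names, Finset.mem_insert, Finset.mem_union]
      exact Or.inr (Or.inr (ihr h))
  | tens n l r ihl ihr =>
    simp only [Formula.subs, List.mem_cons, List.mem_append] at h
    rcases h with rfl | h | h
    · simp [Formula.names, Formula.name]
    · simp only [Formula.names, Finset.mem_insert, Finset.mem_union]
      exact Or.inr (Or.inl (ihl h))
    · simp only [Formula.names, Finset.mem_insert, Finset.mem_union]
      exact Or.inr (Or.inr (ihr h))

lemma mem_seqNames_of_hasSub {A : Formula} (h : HasSub Γ A) : A.name ∈ seqNames Γ := by
  obtain ⟨C, hC, hAC⟩ := Multiset.mem_bind.1 h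
  have h1 : A.name ∈ C.names := name_mem_names (by simpa using hAC)
  have h2 : C.names ≤ (Γ.map Formula.names).sup := Multiset.le_sup (Multiset.mem_map_of_mem _ hC)
  exact h2 h1

lemma switchGraph_adj {lk' : Linking} {σ : Switching} {u v : ℕ} :
    (switchGraph Γ lk' σ).Adj u v ↔
      u ≠ v ∧ (switchAdj Γ lk' σ u v ∨ switchAdj Γ lk' σ v u) := by
  constructor
  · intro h
    rw [switchGraph, fromRel_adj] at h
    exact h
  · intro h
    rw [switchGraph, fromRel_adj]
    exact h

/-- A `⊥`-name and a `1`-name are adjacent iff the jump of the `⊥` targets the `1`. -/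
lemma adj_bot_one (hW : WellNamed Γ) {lk' : Linking} {σ : Switching} {x t : ℕ}
    (hx : IsBotName Γ x) (ht : IsOneName Γ t)
    (hT : TargetsOnes Γ lk') :
    ((switchGraph Γ lk' σ).Adj x t ↔ lk' x = t) := by
  constructor
  · intro h
    rcases (switchGraph_adj.1 h).2 with h1 | h1
    · rcases h1 with ⟨A, B, hs, _⟩ | ⟨A, B, hs, _⟩ | ⟨_, rfl⟩
      · exact absurd (name_inj hW hs hx rfl) (by simp)
      · exact absurd (name_inj hW hs hx rfl) (by simp)
      · rfl
    · rcases h1 with ⟨A, B, hs, _⟩ | ⟨A, B, hs, _⟩ | ⟨hbt, hs⟩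
      · exact absurd (name_inj hW hs ht rfl) (by simp)
      · exact absurd (name_inj hW hs ht rfl) (by simp)
      · exact absurd (name_inj hW hbt ht rfl) (by simp)
  · intro h
    exact switchGraph_adj.2 ⟨bot_ne_one hW hx ht, Or.inl (Or.inr (Or.inr ⟨hx, h.symm⟩))⟩

/-- Changing the jump of a single `⊥` changes the switching graph by an edge swap. -/
lemma adj_update (hW : WellNamed Γ) {lk' lk'' : Linking} {σ : Switching} {x : ℕ}
    (hx : IsBotName Γ x) (hT' : TargetsOnes Γ lk') (hT'' : TargetsOnes Γ lk'')
    (hagree : ∀ y, IsBotName Γ y → y ≠ x → lk' y = lk'' y) (hne : lk' x ≠ lk'' x) :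
    ∀ u v : ℕ, (switchGraph Γ lk'' σ).Adj u v ↔
      (((switchGraph Γ lk' σ).Adj u v ∧ s(u,v) ≠ s(x, lk' x)) ∨ s(u,v) = s(x, lk'' x)) := by
  intro u v
  constructor
  · intro h
    by_cases hp : s(u,v) = s(x, lk'' x)
    · exact Or.inr hp
    left
    refine ⟨?_, ?_⟩
    · obtain ⟨huv, h1⟩ := switchGraph_adj.1 h
      refine switchGraph_adj.2 ⟨huv, ?_⟩
      rcases h1 with h1 | h1
      · rcases h1 with ⟨A, B, hs, hy⟩ | ⟨A, B, hs, hy⟩ | ⟨hbu, hy⟩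
        · exact Or.inl (Or.inl ⟨A, B, hs, hy⟩)
        · exact Or.inl (Or.inr (Or.inl ⟨A, B, hs, hy⟩))
        · by_cases hux : u = x
          · subst hux; subst hy; exact absurd rfl hp
          · exact Or.inl (Or.inr (Or.inr ⟨hbu, by rw [hagree u hbu hux]; exact hy⟩))
      · rcases h1 with ⟨A, B, hs, hy⟩ | ⟨A, B, hs, hy⟩ | ⟨hbv, hy⟩
        · exact Or.inr (Or.inl ⟨A, B, hs, hy⟩)
        · exact Or.inr (Or.inr (Or.inl ⟨A, B, hs, hy⟩))
        · by_cases hvx : v = x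
          · subst hvx; subst hy
            exact absurd (Sym2.eq_swap) hp
          · exact Or.inr (Or.inr (Or.inr ⟨hbv, by rw [hagree v hbv hvx]; exact hy⟩))
    · intro hp'
      rw [Sym2.eq_iff] at hp'
      rcases hp' with ⟨h1, h2⟩ | ⟨h1, h2⟩
      · rw [h1, h2] at h
        exact hne ((adj_bot_one hW hx (hT' x hx) hT'').1 h).symm
      · rw [h1, h2] at h
        exact hne ((adj_bot_one hW hx (hT' x hx) hT'').1 h.symm).symm
  · intro h
    rcases h with ⟨h, hp⟩ | hp
    · obtain ⟨huv, h1⟩ := switchGraph_adj.1 h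
      refine switchGraph_adj.2 ⟨huv, ?_⟩
      rcases h1 with h1 | h1
      · rcases h1 with ⟨A, B, hs, hy⟩ | ⟨A, B, hs, hy⟩ | ⟨hbu, hy⟩
        · exact Or.inl (Or.inl ⟨A, B, hs, hy⟩)
        · exact Or.inl (Or.inr (Or.inl ⟨A, B, hs, hy⟩))
        · by_cases hux : u = x
          · exfalso; subst hux; subst hy; exact hp rfl
          · exact Or.inl (Or.inr (Or.inr ⟨hbu, by rw [← hagree u hbu hux]; exact hy⟩))
      · rcases h1 with ⟨A, B, hs, hy⟩ | ⟨A, B, hs, hy⟩ | ⟨hbv, hy⟩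
        · exact Or.inr (Or.inl ⟨A, B, hs, hy⟩)
        · exact Or.inr (Or.inr (Or.inl ⟨A, B, hs, hy⟩))
        · by_cases hvx : v = x
          · exfalso; subst hvx; subst hy; exact hp Sym2.eq_swap
          · exact Or.inr (Or.inr (Or.inr ⟨hbv, by rw [← hagree v hbv hvx]; exact hy⟩))
    · have hadj : (switchGraph Γ lk'' σ).Adj x (lk'' x) :=
        (adj_bot_one hW hx (hT'' x hx) hT'').2 rfl
      rw [Sym2.eq_iff] at hp
      rcases hp with ⟨h1, h2⟩ | ⟨h1, h2⟩
      · rw [h1, h2]; exact hadj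
      · rw [h1, h2]; exact hadj.symm

/-- Edges that are not jump edges of the moved `⊥`s persist. -/
lemma adj_persist {lk lk' : Linking} {σ : Switching} {u v : ℕ}
    (hagree : ∀ y, IsBotName Γ y → lk y = lk' y ∨ s(u,v) ≠ s(y, lk y))
    (h : (switchGraph Γ lk σ).Adj u v) : (switchGraph Γ lk' σ).Adj u v := by
  obtain ⟨huv, h1⟩ := switchGraph_adj.1 h
  refine switchGraph_adj.2 ⟨huv, ?_⟩
  rcases h1 with h1 | h1
  · rcases h1 with ⟨A, B, hs, hy⟩ | ⟨A, B, hs, hy⟩ | ⟨hbu, hy⟩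
    · exact Or.inl (Or.inl ⟨A, B, hs, hy⟩)
    · exact Or.inl (Or.inr (Or.inl ⟨A, B, hs, hy⟩))
    · rcases hagree u hbu with he | he
      · exact Or.inl (Or.inr (Or.inr ⟨hbu, by rw [← he]; exact hy⟩))
      · exact absurd (by rw [hy]) he
  · rcases h1 with ⟨A, B, hs, hy⟩ | ⟨A, B, hs, hy⟩ | ⟨hbv, hy⟩
    · exact Or.inr (Or.inl ⟨A, B, hs, hy⟩)
    · exact Or.inr (Or.inr (Or.inl ⟨A, B, hs, hy⟩))
    · rcases hagree v hbv with he | he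
      · exact Or.inr (Or.inr (Or.inr ⟨hbv, by rw [← he]; exact hy⟩))
      · exact absurd (by rw [hy, Sym2.eq_swap]) he

lemma adj_mem_seqNames {lk' : Linking} {σ : Switching} {u v : ℕ}
    (hV : ValidLinking Γ lk') (h : (switchGraph Γ lk' σ).Adj u v) :
    u ∈ seqNames Γ ∧ v ∈ seqNames Γ := by
  have key : ∀ y z : ℕ, switchAdj Γ lk' σ y z → y ∈ seqNames Γ ∧ z ∈ seqNames Γ := by
    intro y z h1
    rcases h1 with ⟨A, B, hs, hy⟩ | ⟨A, B, hs, hy⟩ | ⟨hby, hy⟩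
    · refine ⟨by simpa [Formula.name] using mem_seqNames_of_hasSub hs, ?_⟩
      rcases hy with rfl | rfl
      · exact mem_seqNames_of_hasSub (hasSub_trans hs (by
          simp [Formula.subs, self_mem_subs]))
      · exact mem_seqNames_of_hasSub (hasSub_trans hs (by
          simp [Formula.subs, self_mem_subs]))
    · refine ⟨by simpa [Formula.name] using mem_seqNames_of_hasSub hs, ?_⟩
      subst hy
      by_cases hb : σ y
      · simp only [hb, if_true]
        exact mem_seqNames_of_hasSub (hasSub_trans hs (by
          simp [Formula.subs, self_mem_subs]))
      · simp only [hb, if_false]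
        exact mem_seqNames_of_hasSub (hasSub_trans hs (by
          simp [Formula.subs, self_mem_subs]))
    · subst hy
      exact ⟨by simpa [Formula.name] using mem_seqNames_of_hasSub hby, hV y hby⟩
  rcases (switchGraph_adj.1 h).2 with h1 | h1
  · exact key u v h1
  · exact (key v u h1).symm

lemma sym2_subtype_eq {S : Set ℕ} (u v w z : ↥S) :
    s(u,v) = s(w,z) ↔ s((u:ℕ),(v:ℕ)) = s((w:ℕ),(z:ℕ)) := by
  simp [Sym2.eq_iff, Subtype.ext_iff]

/-- Lift a walk to a reachability statement in a graph on a subtype. -/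
lemma reach_lift {S : Set ℕ} {G' : SimpleGraph ℕ} {T : SimpleGraph ↥S}
    (hadj : ∀ u v (hu : u ∈ S) (hv : v ∈ S), G'.Adj u v → T.Adj ⟨u,hu⟩ ⟨v,hv⟩)
    (hmem : ∀ u v, G'.Adj u v → u ∈ S ∧ v ∈ S) :
    ∀ {u v} (_ : G'.Walk u v) (hu : u ∈ S) (hv : v ∈ S), T.Reachable ⟨u,hu⟩ ⟨v,hv⟩ := by
  intro u v w
  induction w with
  | nil => intro hu hv; exact Reachable.refl _
  | cons h p ih =>
    intro hu hv
    have hm := hmem _ _ h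
    exact ((hadj _ _ hu hm.2 h).reachable).trans (ih hm.2 hv)

private lemma reach_or {V : Type*} {T : SimpleGraph V} (x t : V) :
    ∀ {v x'} (_ : T.Walk v x'), x' = x →
      (T.deleteEdges {s(x,t)}).Reachable v x ∨ (T.deleteEdges {s(x,t)}).Reachable v t := by
  intro v x' w
  induction w with
  | nil => rintro rfl; exact Or.inl (Reachable.refl _)
  | cons h p ih =>
    rintro rfl
    rename_i u mid xx
    by_cases he : s(u, mid) = s(xx, t)
    · rw [Sym2.eq_iff] at he
      rcases he with ⟨he1, rfl⟩ | ⟨rfl, he2⟩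
      · exact Or.inl (he1 ▸ Reachable.refl _)
      · exact Or.inr (Reachable.refl _)
    · have hadj : (T.deleteEdges {s(xx,t)}).Adj u mid := by
        rw [deleteEdges_adj]; exact ⟨h, by simpa using he⟩
      rcases ih rfl with h1 | h1
      · exact Or.inl (hadj.reachable.trans h1)
      · exact Or.inr (hadj.reachable.trans h1)

lemma tree_swap {V : Type*} {T T' : SimpleGraph V} {x t t' : V}
    (hT : T.IsTree) (ht : T.Adj x t)
    (hAdj : ∀ u v, T'.Adj u v ↔ ((T.Adj u v ∧ s(u,v) ≠ s(x,t)) ∨ s(u,v) = s(x,t')))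
    (hreach : (T.deleteEdges {s(x,t)}).Reachable t t') : T'.IsTree := by
  have hHle : T.deleteEdges {s(x,t)} ≤ T' := by
    intro u v h
    rw [deleteEdges_adj] at h
    exact (hAdj u v).2 (Or.inl ⟨h.1, by simpa using h.2⟩)
  have hdel : (T \ fromEdgeSet {s(x,t)}) = T.deleteEdges {s(x,t)} := rfl
  have hacyc := hT.IsAcyclic
  have hbr : ¬ (T.deleteEdges {s(x,t)}).Reachable x t := by
    have := (isAcyclic_iff_forall_adj_isBridge.mp hacyc) ht
    rw [isBridge_iff] at this
    exact this
  have hadj' : T'.Adj x t' := (hAdj x t').2 (Or.inr rfl)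
  have hreachx : ∀ v, T'.Reachable v x := by
    intro v
    rcases reach_or x t ((hT.isConnected.preconnected v x).some) rfl with h1 | h1
    · exact h1.mono hHle
    · exact ((h1.trans hreach).mono hHle).trans (hadj'.symm.reachable)
  constructor
  · exact { preconnected := fun u v => (hreachx u).trans (hreachx v).symm, nonempty := ⟨x⟩ }
  · intro v c hc
    by_cases he' : s(x, t') ∈ c.edges
    · have hcyc := (adj_and_reachable_delete_edges_iff_exists_cycle (G := T') (v := x) (w := t')).2
        ⟨v, c, hc, he'⟩
      have hle2 : (T' \ fromEdgeSet {s(x,t')}) ≤ T.deleteEdges {s(x,t)} := by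
        intro u w h
        obtain ⟨h1, h2⟩ := h
        rw [fromEdgeSet_adj] at h2
        push_neg at h2
        have hne' : s(u, w) ≠ s(x, t') := by
          intro hh; exact h1.ne (h2 (by simpa using hh))
        rcases (hAdj u w).1 h1 with ⟨h3, h4⟩ | h3
        · rw [deleteEdges_adj]; exact ⟨h3, by simpa using h4⟩
        · exact absurd h3 hne'
      have hr : (T.deleteEdges {s(x,t)}).Reachable x t' := hcyc.2.mono hle2
      exact hbr (hr.trans hreach.symm)
    · have hedges : ∀ e ∈ c.edges, e ∈ T.edgeSet := by
        intro e he
        induction e with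
        | h u w =>
          have hh : T'.Adj u w := c.adj_of_mem_edges he
          rcases (hAdj u w).1 hh with ⟨h3, _⟩ | h3
          · exact h3
          · exact absurd (h3 ▸ he) he'
      exact hacyc (c.transfer T hedges) (hc.transfer hedges)

/-- One rewiring step preserves the tree property of all switching graphs, provided
the new target is reachable from the old one without using the old jump edge. -/
lemma step_trees (hW : WellNamed Γ) {lkp lkn : Linking} {x : ℕ}
    (hx : IsBotName Γ x)
    (hVp : ValidLinking Γ lkp) (hTp : TargetsOnes Γ lkp) (hTn : TargetsOnes Γ lkn)
    (hagree : ∀ y, IsBotName Γ y → y ≠ x → lkp y = lkn y) (hne : lkp x ≠ lkn x)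
    (hmemn : lkn x ∈ seqNames Γ)
    (hprev : ∀ σ : Switching, ((switchGraph Γ lkp σ).induce {z : ℕ | z ∈ seqNames Γ}).IsTree)
    (hwalk : ∀ σ : Switching,
      Nonempty (((switchGraph Γ lkp σ).deleteEdges {s(x, lkp x)}).Walk (lkp x) (lkn x))) :
    ∀ σ : Switching, ((switchGraph Γ lkn σ).induce {z : ℕ | z ∈ seqNames Γ}).IsTree := by
  intro σ
  have hxS : x ∈ {z : ℕ | z ∈ seqNames Γ} := by
    simpa [Formula.name] using mem_seqNames_of_hasSub hx
  have htS : lkp x ∈ {z : ℕ | z ∈ seqNames Γ} := hVp x hx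
  have htnS : lkn x ∈ {z : ℕ | z ∈ seqNames Γ} := hmemn
  refine tree_swap (x := ⟨x, hxS⟩) (t := ⟨lkp x, htS⟩) (t' := ⟨lkn x, htnS⟩)
    (hprev σ) ?_ ?_ ?_
  · show (switchGraph Γ lkp σ).Adj x (lkp x)
    exact (adj_bot_one hW hx (hTp x hx) hTp).2 rfl
  · intro u v
    simp only [comap_adj, Function.Embedding.coe_subtype, Ne, sym2_subtype_eq]
    exact adj_update hW hx hTp hTn hagree hne u v
  · refine reach_lift (G' := (switchGraph Γ lkp σ).deleteEdges {s(x, lkp x)}) ?_ ?_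
      (hwalk σ).some htS htnS
    · intro u v hu hv h
      rw [deleteEdges_adj] at h
      rw [deleteEdges_adj]
      refine ⟨h.1, ?_⟩
      rw [Set.mem_singleton_iff, sym2_subtype_eq]
      simpa using h.2
    · intro u v h
      rw [deleteEdges_adj] at h
      exact adj_mem_seqNames hVp h.1

/-- Packaged data of the hypothesis path for one switching. -/
def PD (Γ : Sequent) (lk : Linking) (a b c d : ℕ) (σ : Switching) : Prop :=
  ∃ (p1 : (switchGraph Γ lk σ).Walk a b) (p2 : (switchGraph Γ lk σ).Walk (lk b) (lk c))
    (p3 : (switchGraph Γ lk σ).Walk c d),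
    (∀ z ∈ p1.support, z ∉ p2.support) ∧
    (∀ z ∈ p1.support, z ∉ p3.support) ∧
    (∀ z ∈ p2.support, z ∉ p3.support) ∧
    lk a ∉ p1.support ∧ lk a ∉ p2.support ∧ lk a ∉ p3.support ∧
    lk d ∉ p1.support ∧ lk d ∉ p2.support ∧ lk d ∉ p3.support ∧ lk a ≠ lk d

lemma mk_PD (Γ : Sequent) (lk : Linking) (a b c d : ℕ) (σ : Switching)
    (h₁ : (switchGraph Γ lk σ).Adj (lk a) a)
    (p₁ : (switchGraph Γ lk σ).Walk a b)
    (h₂ : (switchGraph Γ lk σ).Adj b (lk b))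
    (p₂ : (switchGraph Γ lk σ).Walk (lk b) (lk c))
    (h₃ : (switchGraph Γ lk σ).Adj (lk c) c)
    (p₃ : (switchGraph Γ lk σ).Walk c d)
    (h₄ : (switchGraph Γ lk σ).Adj d (lk d))
    (hP : (Walk.cons h₁ (p₁.append (Walk.cons h₂ (p₂.append (Walk.cons h₃
          (p₃.append (Walk.cons h₄ Walk.nil))))))).IsPath) : PD Γ lk a b c d σ := by
  rw [Walk.isPath_def] at hP
  simp only [Walk.support_cons, Walk.support_append, Walk.support_nil, List.tail_cons] at hP
  simp only [List.nodup_cons, List.nodup_append, List.mem_append, List.mem_singleton,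
    List.disjoint_cons_right, List.nodup_singleton, List.disjoint_singleton,
    List.mem_cons, not_or] at hP
  obtain ⟨⟨a1, a2, a3, hAD, -⟩, -, ⟨-, ⟨-, -, dd3'⟩, d2'⟩, d1'⟩ := hP
  have dd3 : lk d ∉ p₃.support := fun h => dd3' _ h _ (Or.inl rfl) rfl
  have d2x : ∀ {z}, z ∈ p₂.support → z ∈ p₃.support ++ [lk d] → False :=
    fun {z} hz h => d2' z hz z (by simpa using h) rfl
  have d1x : ∀ {z}, z ∈ p₁.support → z ∈ p₂.support ++ (p₃.support ++ [lk d]) → False :=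
    fun {z} hz h => d1' z hz z (by simpa using h) rfl
  refine ⟨p₁, p₂, p₃, ?_, ?_, ?_, a1, a2, a3, ?_, ?_, dd3, hAD⟩
  · intro z hz hz2
    exact d1x hz (List.mem_append.2 (Or.inl hz2))
  · intro z hz hz3
    exact d1x hz (List.mem_append.2 (Or.inr (List.mem_append.2 (Or.inl hz3))))
  · intro z hz hz3
    exact d2x hz (List.mem_append.2 (Or.inl hz3))
  · intro hz
    exact d1x hz (by simp)
  · intro hz
    exact d2x hz (by simp)

lemma pair_ne {u v y t : ℕ}
    (h : (u ≠ y ∧ u ≠ t) ∨ (v ≠ y ∧ v ≠ t) ∨ (u ≠ y ∧ v ≠ y) ∨ (u ≠ t ∧ v ≠ t)) :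
    s(u,v) ≠ s(y,t) := by
  simp only [Ne, Sym2.eq_iff]
  tauto

/-- A jump edge of `lkp` distinct from the deleted edge, in the deleted graph. -/
lemma jump_adj_del (hW : WellNamed Γ) {lkp : Linking} {σ : Switching} {y t x told : ℕ}
    (hy : IsBotName Γ y) (hone : IsOneName Γ t) (hTp : TargetsOnes Γ lkp)
    (ht : lkp y = t) (hyx : y ≠ x) (hyt : y ≠ told) :
    (((switchGraph Γ lkp σ).deleteEdges {s(x, told)}).Adj y t) := by
  rw [deleteEdges_adj]
  refine ⟨(adj_bot_one hW hy hone hTp).2 ht, ?_⟩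
  simp only [Set.mem_singleton_iff]
  exact pair_ne (Or.inl ⟨hyx, hyt⟩)

/-- Segment edges survive in the rewired, deleted graph. -/
lemma seg_edges (hW : WellNamed Γ) {lk lkp : Linking} {σ : Switching} {a b c d : ℕ}
    (hagree : ∀ y, IsBotName Γ y → y ≠ a → y ≠ b → y ≠ c → y ≠ d → lk y = lkp y)
    {u v : ℕ} (p : (switchGraph Γ lk σ).Walk u v)
    (ha : a ∉ p.support ∨ lk a ∉ p.support) (hb : b ∉ p.support ∨ lk b ∉ p.support)
    (hc : c ∉ p.support ∨ lk c ∉ p.support) (hd : d ∉ p.support ∨ lk d ∉ p.support)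
    {x told : ℕ} (hx : x ∉ p.support ∨ told ∉ p.support) :
    ∀ e ∈ p.edges, e ∈ (((switchGraph Γ lkp σ).deleteEdges {s(x, told)}).edgeSet) := by
  intro e he
  induction e with
  | h u' v' =>
    have hu' : u' ∈ p.support := p.fst_mem_support_of_mem_edges he
    have hv' : v' ∈ p.support := p.snd_mem_support_of_mem_edges he
    have hadj : (switchGraph Γ lk σ).Adj u' v' := p.adj_of_mem_edges he
    rw [mem_edgeSet, deleteEdges_adj]
    constructor
    · refine adj_persist (fun y hy => ?_) hadj
      by_cases hya : y = a
      · subst hya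
        rcases ha with h' | h'
        · exact Or.inr (pair_ne (Or.inr (Or.inr (Or.inl ⟨fun hh => h' (hh ▸ hu'),
            fun hh => h' (hh ▸ hv')⟩))))
        · exact Or.inr (pair_ne (Or.inr (Or.inr (Or.inr ⟨fun hh => h' (hh ▸ hu'),
            fun hh => h' (hh ▸ hv')⟩))))
      by_cases hyb : y = b
      · subst hyb
        rcases hb with h' | h'
        · exact Or.inr (pair_ne (Or.inr (Or.inr (Or.inl ⟨fun hh => h' (hh ▸ hu'),
            fun hh => h' (hh ▸ hv')⟩))))
        · exact Or.inr (pair_ne (Or.inr (Or.inr (Or.inr ⟨fun hh => h' (hh ▸ hu'),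
            fun hh => h' (hh ▸ hv')⟩))))
      by_cases hyc : y = c
      · subst hyc
        rcases hc with h' | h'
        · exact Or.inr (pair_ne (Or.inr (Or.inr (Or.inl ⟨fun hh => h' (hh ▸ hu'),
            fun hh => h' (hh ▸ hv')⟩))))
        · exact Or.inr (pair_ne (Or.inr (Or.inr (Or.inr ⟨fun hh => h' (hh ▸ hu'),
            fun hh => h' (hh ▸ hv')⟩))))
      by_cases hyd : y = d
      · subst hyd
        rcases hd with h' | h'
        · exact Or.inr (pair_ne (Or.inr (Or.inr (Or.inl ⟨fun hh => h' (hh ▸ hu'),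
            fun hh => h' (hh ▸ hv')⟩))))
        · exact Or.inr (pair_ne (Or.inr (Or.inr (Or.inr ⟨fun hh => h' (hh ▸ hu'),
            fun hh => h' (hh ▸ hv')⟩))))
      exact Or.inl (hagree y hy hya hyb hyc hyd)
    · simp only [Set.mem_singleton_iff]
      rcases hx with h' | h'
      · exact pair_ne (Or.inr (Or.inr (Or.inl ⟨fun hh => h' (hh ▸ hu'),
          fun hh => h' (hh ▸ hv')⟩)))
      · exact pair_ne (Or.inr (Or.inr (Or.inr ⟨fun hh => h' (hh ▸ hu'),
          fun hh => h' (hh ▸ hv')⟩)))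

/-- Simultaneous update of a linking at four (distinct) `⊥`-names. -/
def upd4 (lk : Linking) (a b c d ta tb tc td : ℕ) : Linking :=
  fun x => if x = a then ta else if x = b then tb else if x = c then tc else
    if x = d then td else lk x

variable {lk : Linking} {a b c d ta tb tc td : ℕ}

lemma upd4_a : upd4 lk a b c d ta tb tc td a = ta := by
  unfold upd4; rw [if_pos rfl]

lemma upd4_b (h : a ≠ b) : upd4 lk a b c d ta tb tc td b = tb := by
  unfold upd4; rw [if_neg (Ne.symm h), if_pos rfl]

lemma upd4_c (h1 : a ≠ c) (h2 : b ≠ c) : upd4 lk a b c d ta tb tc td c = tc := by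
  unfold upd4; rw [if_neg (Ne.symm h1), if_neg (Ne.symm h2), if_pos rfl]

lemma upd4_d (h1 : a ≠ d) (h2 : b ≠ d) (h3 : c ≠ d) : upd4 lk a b c d ta tb tc td d = td := by
  unfold upd4; rw [if_neg (Ne.symm h1), if_neg (Ne.symm h2), if_neg (Ne.symm h3), if_pos rfl]

lemma upd4_other {y : ℕ} (h1 : y ≠ a) (h2 : y ≠ b) (h3 : y ≠ c) (h4 : y ≠ d) :
    upd4 lk a b c d ta tb tc td y = lk y := by
  unfold upd4; rw [if_neg h1, if_neg h2, if_neg h3, if_neg h4]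

lemma upd4_targetsOnes (h : TargetsOnes Γ lk) (h1 : IsOneName Γ ta) (h2 : IsOneName Γ tb)
    (h3 : IsOneName Γ tc) (h4 : IsOneName Γ td) :
    TargetsOnes Γ (upd4 lk a b c d ta tb tc td) := by
  intro y hy
  unfold upd4
  split_ifs <;> first | assumption | exact h y hy

lemma upd4_valid (h : ValidLinking Γ lk) (h1 : ta ∈ seqNames Γ) (h2 : tb ∈ seqNames Γ)
    (h3 : tc ∈ seqNames Γ) (h4 : td ∈ seqNames Γ) :
    ValidLinking Γ (upd4 lk a b c d ta tb tc td) := by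
  intro y hy
  unfold upd4
  split_ifs <;> first | assumption | exact h y hy

end MLLAux

open MLL SimpleGraph MLLAux in
theorem mll_double_exchange' {Γ : Sequent} (hW : WellNamed Γ)
    (lk : Linking) (hC : Correct Γ lk) (hOnes : TargetsOnes Γ lk)
    {a b c d : ℕ} (ha : IsBotName Γ a) (hb : IsBotName Γ b)
    (hc : IsBotName Γ c) (hd : IsBotName Γ d)
    (hpath : ∀ σ : Switching,
      ∃ (h₁ : (switchGraph Γ lk σ).Adj (lk a) a)
        (p₁ : (switchGraph Γ lk σ).Walk a b)
        (h₂ : (switchGraph Γ lk σ).Adj b (lk b))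
        (p₂ : (switchGraph Γ lk σ).Walk (lk b) (lk c))
        (h₃ : (switchGraph Γ lk σ).Adj (lk c) c)
        (p₃ : (switchGraph Γ lk σ).Walk c d)
        (h₄ : (switchGraph Γ lk σ).Adj d (lk d)),
        (Walk.cons h₁ (p₁.append (Walk.cons h₂ (p₂.append (Walk.cons h₃
          (p₃.append (Walk.cons h₄ Walk.nil))))))).IsPath) :
    NetEquiv Γ lk (upd4 lk a b c d (lk b) (lk a) (lk d) (lk c)) := by
  classical
  have KEY : ∀ σ : Switching, PD Γ lk a b c d σ := by
    intro σ
    obtain ⟨h₁, p₁, h₂, p₂, h₃, p₃, h₄, hP⟩ := hpath σ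
    exact mk_PD Γ lk a b c d σ h₁ p₁ h₂ p₂ h₃ p₃ h₄ hP
  -- global distinctness facts
  obtain ⟨q1, q2, q3, e12, e13, e23, ea1, ea2, ea3, ed1, ed2, ed3, hADg⟩ := KEY (fun _ => false)
  have hab : a ≠ b := fun h => ea2 (by rw [h]; exact q2.start_mem_support)
  have hcd : c ≠ d := fun h => ed2 (by rw [← h]; exact q2.end_mem_support)
  have hac : a ≠ c := fun h => e13 a q1.start_mem_support (by rw [h]; exact q3.start_mem_support)
  have had : a ≠ d := fun h => e13 a q1.start_mem_support (by rw [h]; exact q3.end_mem_support)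
  have hbc : b ≠ c := fun h => e13 b q1.end_mem_support (by rw [h]; exact q3.start_mem_support)
  have hbd : b ≠ d := fun h => e13 b q1.end_mem_support (by rw [h]; exact q3.end_mem_support)
  have hAB : lk a ≠ lk b := fun h => ea2 (by rw [h]; exact q2.start_mem_support)
  have hAC : lk a ≠ lk c := fun h => ea2 (by rw [h]; exact q2.end_mem_support)
  have hBD : lk b ≠ lk d := fun h => ed2 (by rw [← h]; exact q2.start_mem_support)
  have hCD : lk c ≠ lk d := fun h => ed2 (by rw [← h]; exact q2.end_mem_support)
  have botone : ∀ x, IsBotName Γ x → ∀ y, IsBotName Γ y → x ≠ lk y :=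
    fun x hx y hy => bot_ne_one hW hx (hOnes y hy)
  have memS : ∀ y, IsBotName Γ y → lk y ∈ seqNames Γ := fun y hy => hC.1 y hy
  have agreeK : ∀ ta tb tc td : ℕ, ∀ y, IsBotName Γ y →
      y ≠ a → y ≠ b → y ≠ c → y ≠ d → lk y = upd4 lk a b c d ta tb tc td y :=
    fun ta tb tc td y _ h1 h2 h3 h4 => (upd4_other h1 h2 h3 h4).symm
  -- the six linkings
  -- lk1 = (A,D,C,D), lk2 = (A,D,C,A), lk3 = (B,D,C,A), lk4 = (B,D,D,A),
  -- lk5 = (B,A,D,A), lk6 = (B,A,D,C)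
  have T1 : TargetsOnes Γ (upd4 lk a b c d (lk a) (lk d) (lk c) (lk d)) :=
    upd4_targetsOnes hOnes (hOnes a ha) (hOnes d hd) (hOnes c hc) (hOnes d hd)
  have T2 : TargetsOnes Γ (upd4 lk a b c d (lk a) (lk d) (lk c) (lk a)) :=
    upd4_targetsOnes hOnes (hOnes a ha) (hOnes d hd) (hOnes c hc) (hOnes a ha)
  have T3 : TargetsOnes Γ (upd4 lk a b c d (lk b) (lk d) (lk c) (lk a)) :=
    upd4_targetsOnes hOnes (hOnes b hb) (hOnes d hd) (hOnes c hc) (hOnes a ha)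
  have T4 : TargetsOnes Γ (upd4 lk a b c d (lk b) (lk d) (lk d) (lk a)) :=
    upd4_targetsOnes hOnes (hOnes b hb) (hOnes d hd) (hOnes d hd) (hOnes a ha)
  have T5 : TargetsOnes Γ (upd4 lk a b c d (lk b) (lk a) (lk d) (lk a)) :=
    upd4_targetsOnes hOnes (hOnes b hb) (hOnes a ha) (hOnes d hd) (hOnes a ha)
  have T6 : TargetsOnes Γ (upd4 lk a b c d (lk b) (lk a) (lk d) (lk c)) :=
    upd4_targetsOnes hOnes (hOnes b hb) (hOnes a ha) (hOnes d hd) (hOnes c hc)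
  have V1 : ValidLinking Γ (upd4 lk a b c d (lk a) (lk d) (lk c) (lk d)) :=
    upd4_valid hC.1 (memS a ha) (memS d hd) (memS c hc) (memS d hd)
  have V2 : ValidLinking Γ (upd4 lk a b c d (lk a) (lk d) (lk c) (lk a)) :=
    upd4_valid hC.1 (memS a ha) (memS d hd) (memS c hc) (memS a ha)
  have V3 : ValidLinking Γ (upd4 lk a b c d (lk b) (lk d) (lk c) (lk a)) :=
    upd4_valid hC.1 (memS b hb) (memS d hd) (memS c hc) (memS a ha)
  have V4 : ValidLinking Γ (upd4 lk a b c d (lk b) (lk d) (lk d) (lk a)) :=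
    upd4_valid hC.1 (memS b hb) (memS d hd) (memS d hd) (memS a ha)
  have V5 : ValidLinking Γ (upd4 lk a b c d (lk b) (lk a) (lk d) (lk a)) :=
    upd4_valid hC.1 (memS b hb) (memS a ha) (memS d hd) (memS a ha)
  have V6 : ValidLinking Γ (upd4 lk a b c d (lk b) (lk a) (lk d) (lk c)) :=
    upd4_valid hC.1 (memS b hb) (memS a ha) (memS d hd) (memS c hc)
  -- Step 1 : rewire b from lk b to lk d
  have trees1 : ∀ σ : Switching,
      ((switchGraph Γ (upd4 lk a b c d (lk a) (lk d) (lk c) (lk d)) σ).induce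
        {z : ℕ | z ∈ seqNames Γ}).IsTree := by
    refine step_trees hW hb hC.1 hOnes T1 ?_ ?_ ?_ hC.2 ?_
    · intro y hy hyb
      by_cases h1 : y = a
      · subst h1; rw [upd4_a]
      by_cases h3 : y = c
      · subst h3; rw [upd4_c hac hbc]
      by_cases h4 : y = d
      · subst h4; rw [upd4_d had hbd hcd]
      · exact agreeK _ _ _ _ y hy h1 hyb h3 h4
    · rw [upd4_b hab]; exact hBD
    · rw [upd4_b hab]; exact memS d hd
    · intro σ
      obtain ⟨p1, p2, p3, d12, d13, d23, a1, a2, a3, dd1, dd2, dd3, hADσ⟩ := KEY σ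
      have nb2 : b ∉ p2.support := d12 b p1.end_mem_support
      have nb3 : b ∉ p3.support := d13 b p1.end_mem_support
      have nc2 : c ∉ p2.support := fun h => d23 c h p3.start_mem_support
      rw [upd4_b hab]
      refine ⟨(p2.transfer _ ?_).append (Walk.cons ?_ ((p3.transfer _ ?_).append
        (Walk.cons ?_ Walk.nil)))⟩
      · exact seg_edges hW (fun y _ _ _ _ _ => rfl) p2 (Or.inr a2) (Or.inl nb2)
          (Or.inl nc2) (Or.inr dd2) (Or.inl nb2)
      · exact (jump_adj_del hW hc (hOnes c hc) hOnes rfl (Ne.symm hbc) (botone c hc b hb)).symm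
      · exact seg_edges hW (fun y _ _ _ _ _ => rfl) p3 (Or.inr a3) (Or.inl nb3)
          (Or.inr (d23 (lk c) p2.end_mem_support)) (Or.inr dd3) (Or.inl nb3)
      · exact jump_adj_del hW hd (hOnes d hd) hOnes rfl (Ne.symm hbd) (botone d hd b hb)
  -- Step 2 : rewire d from lk d to lk a
  have trees2 : ∀ σ : Switching,
      ((switchGraph Γ (upd4 lk a b c d (lk a) (lk d) (lk c) (lk a)) σ).induce
        {z : ℕ | z ∈ seqNames Γ}).IsTree := by
    refine step_trees hW hd V1 T1 T2 ?_ ?_ ?_ trees1 ?_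
    · intro y hy hyd
      by_cases h1 : y = a
      · subst h1; rw [upd4_a, upd4_a]
      by_cases h2 : y = b
      · subst h2; rw [upd4_b hab, upd4_b hab]
      by_cases h3 : y = c
      · subst h3; rw [upd4_c hac hbc, upd4_c hac hbc]
      · rw [upd4_other h1 h2 h3 hyd, upd4_other h1 h2 h3 hyd]
    · rw [upd4_d had hbd hcd, upd4_d had hbd hcd]; exact Ne.symm hADg
    · rw [upd4_d had hbd hcd]; exact memS a ha
    · intro σ
      obtain ⟨p1, p2, p3, d12, d13, d23, a1, a2, a3, dd1, dd2, dd3, hADσ⟩ := KEY σ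
      have nd1 : d ∉ p1.support := fun h => d13 d h p3.end_mem_support
      have nB1 : lk b ∉ p1.support := fun h => d12 (lk b) h p2.start_mem_support
      have nc1 : c ∉ p1.support := fun h => d13 c h p3.start_mem_support
      rw [upd4_d had hbd hcd, upd4_d had hbd hcd]
      refine ⟨Walk.cons (Adj.symm ?_) (((p1.transfer _ ?_).reverse).append
        (Walk.cons ?_ Walk.nil))⟩
      · exact jump_adj_del hW hb (hOnes d hd) T1 (upd4_b hab) hbd (botone b hb d hd)
      · exact seg_edges hW (agreeK _ _ _ _) p1 (Or.inr a1) (Or.inr nB1)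
          (Or.inl nc1) (Or.inl nd1) (Or.inl nd1)
      · exact jump_adj_del hW ha (hOnes a ha) T1 upd4_a had (botone a ha d hd)
  -- Step 3 : rewire a from lk a to lk b
  have trees3 : ∀ σ : Switching,
      ((switchGraph Γ (upd4 lk a b c d (lk b) (lk d) (lk c) (lk a)) σ).induce
        {z : ℕ | z ∈ seqNames Γ}).IsTree := by
    refine step_trees hW ha V2 T2 T3 ?_ ?_ ?_ trees2 ?_
    · intro y hy hya
      by_cases h2 : y = b
      · subst h2; rw [upd4_b hab, upd4_b hab]
      by_cases h3 : y = c
      · subst h3; rw [upd4_c hac hbc, upd4_c hac hbc]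
      by_cases h4 : y = d
      · subst h4; rw [upd4_d had hbd hcd, upd4_d had hbd hcd]
      · rw [upd4_other hya h2 h3 h4, upd4_other hya h2 h3 h4]
    · rw [upd4_a, upd4_a]; exact hAB
    · rw [upd4_a]; exact memS b hb
    · intro σ
      obtain ⟨p1, p2, p3, d12, d13, d23, a1, a2, a3, dd1, dd2, dd3, hADσ⟩ := KEY σ
      have na2 : a ∉ p2.support := d12 a p1.start_mem_support
      have na3 : a ∉ p3.support := d13 a p1.start_mem_support
      have nb2 : b ∉ p2.support := d12 b p1.end_mem_support
      have nb3 : b ∉ p3.support := d13 b p1.end_mem_support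
      have nc2 : c ∉ p2.support := fun h => d23 c h p3.start_mem_support
      rw [upd4_a, upd4_a]
      refine ⟨Walk.cons (Adj.symm ?_) (((p3.transfer _ ?_).reverse).append
        (Walk.cons ?_ (p2.transfer _ ?_).reverse))⟩
      · exact jump_adj_del hW hd (hOnes a ha) T2 (upd4_d had hbd hcd)
          (Ne.symm had) (botone d hd a ha)
      · exact seg_edges hW (agreeK _ _ _ _) p3 (Or.inr a3) (Or.inl nb3)
          (Or.inr (d23 (lk c) p2.end_mem_support)) (Or.inr dd3) (Or.inl na3)
      · exact jump_adj_del hW hc (hOnes c hc) T2 (upd4_c hac hbc)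
          (Ne.symm hac) (botone c hc a ha)
      · exact seg_edges hW (agreeK _ _ _ _) p2 (Or.inr a2) (Or.inl nb2)
          (Or.inl nc2) (Or.inr dd2) (Or.inl na2)
  -- Step 4 : rewire c from lk c to lk d
  have trees4 : ∀ σ : Switching,
      ((switchGraph Γ (upd4 lk a b c d (lk b) (lk d) (lk d) (lk a)) σ).induce
        {z : ℕ | z ∈ seqNames Γ}).IsTree := by
    refine step_trees hW hc V3 T3 T4 ?_ ?_ ?_ trees3 ?_
    · intro y hy hyc
      by_cases h1 : y = a
      · subst h1; rw [upd4_a, upd4_a]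
      by_cases h2 : y = b
      · subst h2; rw [upd4_b hab, upd4_b hab]
      by_cases h4 : y = d
      · subst h4; rw [upd4_d had hbd hcd, upd4_d had hbd hcd]
      · rw [upd4_other h1 h2 hyc h4, upd4_other h1 h2 hyc h4]
    · rw [upd4_c hac hbc, upd4_c hac hbc]; exact hCD
    · rw [upd4_c hac hbc]; exact memS d hd
    · intro σ
      obtain ⟨p1, p2, p3, d12, d13, d23, a1, a2, a3, dd1, dd2, dd3, hADσ⟩ := KEY σ
      have nb2 : b ∉ p2.support := d12 b p1.end_mem_support
      have nc2 : c ∉ p2.support := fun h => d23 c h p3.start_mem_support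
      have nc1 : c ∉ p1.support := fun h => d13 c h p3.start_mem_support
      have nd1 : d ∉ p1.support := fun h => d13 d h p3.end_mem_support
      have nB1 : lk b ∉ p1.support := fun h => d12 (lk b) h p2.start_mem_support
      rw [upd4_c hac hbc, upd4_c hac hbc]
      refine ⟨((p2.transfer _ ?_).reverse).append (Walk.cons (Adj.symm ?_)
        ((p1.transfer _ ?_).append (Walk.cons ?_ Walk.nil)))⟩
      · exact seg_edges hW (agreeK _ _ _ _) p2 (Or.inr a2) (Or.inl nb2)
          (Or.inl nc2) (Or.inr dd2) (Or.inl nc2)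
      · exact jump_adj_del hW ha (hOnes b hb) T3 upd4_a hac (botone a ha c hc)
      · exact seg_edges hW (agreeK _ _ _ _) p1 (Or.inr a1) (Or.inr nB1)
          (Or.inl nc1) (Or.inl nd1) (Or.inl nc1)
      · exact jump_adj_del hW hb (hOnes d hd) T3 (upd4_b hab)
          hbc (botone b hb c hc)
  -- Step 5 : rewire b from lk d to lk a
  have trees5 : ∀ σ : Switching,
      ((switchGraph Γ (upd4 lk a b c d (lk b) (lk a) (lk d) (lk a)) σ).induce
        {z : ℕ | z ∈ seqNames Γ}).IsTree := by
    refine step_trees hW hb V4 T4 T5 ?_ ?_ ?_ trees4 ?_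
    · intro y hy hyb
      by_cases h1 : y = a
      · subst h1; rw [upd4_a, upd4_a]
      by_cases h3 : y = c
      · subst h3; rw [upd4_c hac hbc, upd4_c hac hbc]
      by_cases h4 : y = d
      · subst h4; rw [upd4_d had hbd hcd, upd4_d had hbd hcd]
      · rw [upd4_other h1 hyb h3 h4, upd4_other h1 hyb h3 h4]
    · rw [upd4_b hab, upd4_b hab]; exact Ne.symm hADg
    · rw [upd4_b hab]; exact memS a ha
    · intro σ
      obtain ⟨p1, p2, p3, d12, d13, d23, a1, a2, a3, dd1, dd2, dd3, hADσ⟩ := KEY σ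
      have nb3 : b ∉ p3.support := d13 b p1.end_mem_support
      rw [upd4_b hab, upd4_b hab]
      refine ⟨Walk.cons (Adj.symm ?_) ((p3.transfer _ ?_).append
        (Walk.cons ?_ Walk.nil))⟩
      · exact jump_adj_del hW hc (hOnes d hd) T4 (upd4_c hac hbc)
          (Ne.symm hbc) (botone c hc d hd)
      · exact seg_edges hW (agreeK _ _ _ _) p3 (Or.inr a3) (Or.inl nb3)
          (Or.inr (d23 (lk c) p2.end_mem_support)) (Or.inr dd3) (Or.inl nb3)
      · exact jump_adj_del hW hd (hOnes a ha) T4 (upd4_d had hbd hcd)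
          (Ne.symm hbd) (botone d hd d hd)
  -- Step 6 : rewire d from lk a to lk c
  have trees6 : ∀ σ : Switching,
      ((switchGraph Γ (upd4 lk a b c d (lk b) (lk a) (lk d) (lk c)) σ).induce
        {z : ℕ | z ∈ seqNames Γ}).IsTree := by
    refine step_trees hW hd V5 T5 T6 ?_ ?_ ?_ trees5 ?_
    · intro y hy hyd
      by_cases h1 : y = a
      · subst h1; rw [upd4_a, upd4_a]
      by_cases h2 : y = b
      · subst h2; rw [upd4_b hab, upd4_b hab]
      by_cases h3 : y = c
      · subst h3; rw [upd4_c hac hbc, upd4_c hac hbc]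
      · rw [upd4_other h1 h2 h3 hyd, upd4_other h1 h2 h3 hyd]
    · rw [upd4_d had hbd hcd, upd4_d had hbd hcd]; exact hAC
    · rw [upd4_d had hbd hcd]; exact memS c hc
    · intro σ
      obtain ⟨p1, p2, p3, d12, d13, d23, a1, a2, a3, dd1, dd2, dd3, hADσ⟩ := KEY σ
      have nd1 : d ∉ p1.support := fun h => d13 d h p3.end_mem_support
      have nd2 : d ∉ p2.support := fun h => d23 d h p3.end_mem_support
      have nc1 : c ∉ p1.support := fun h => d13 c h p3.start_mem_support
      have nb2 : b ∉ p2.support := d12 b p1.end_mem_support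
      have nB1 : lk b ∉ p1.support := fun h => d12 (lk b) h p2.start_mem_support
      have nc2 : c ∉ p2.support := fun h => d23 c h p3.start_mem_support
      rw [upd4_d had hbd hcd, upd4_d had hbd hcd]
      refine ⟨Walk.cons (Adj.symm ?_) (((p1.transfer _ ?_).reverse).append
        (Walk.cons ?_ (p2.transfer _ ?_)))⟩
      · exact jump_adj_del hW hb (hOnes a ha) T5 (upd4_b hab) hbd (botone b hb a ha)
      · exact seg_edges hW (agreeK _ _ _ _) p1 (Or.inr a1) (Or.inr nB1)
          (Or.inl nc1) (Or.inl nd1) (Or.inl nd1)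
      · exact jump_adj_del hW ha (hOnes b hb) T5 upd4_a had (botone a ha a ha)
      · exact seg_edges hW (agreeK _ _ _ _) p2 (Or.inr a2) (Or.inl nb2)
          (Or.inl nc2) (Or.inr dd2) (Or.inl nd2)
  -- Correctness of all intermediate linkings, and the rewiring chain
  have C1 : Correct Γ (upd4 lk a b c d (lk a) (lk d) (lk c) (lk d)) := ⟨V1, trees1⟩
  have C2 : Correct Γ (upd4 lk a b c d (lk a) (lk d) (lk c) (lk a)) := ⟨V2, trees2⟩
  have C3 : Correct Γ (upd4 lk a b c d (lk b) (lk d) (lk c) (lk a)) := ⟨V3, trees3⟩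
  have C4 : Correct Γ (upd4 lk a b c d (lk b) (lk d) (lk d) (lk a)) := ⟨V4, trees4⟩
  have C5 : Correct Γ (upd4 lk a b c d (lk b) (lk a) (lk d) (lk a)) := ⟨V5, trees5⟩
  have C6 : Correct Γ (upd4 lk a b c d (lk b) (lk a) (lk d) (lk c)) := ⟨V6, trees6⟩
  have R1 : Rewire Γ lk (upd4 lk a b c d (lk a) (lk d) (lk c) (lk d)) := by
    refine ⟨hC, C1, b, hb, ?_, ?_⟩
    · rw [upd4_b hab]; exact hBD
    · intro y hy hyb
      by_cases h1 : y = a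
      · subst h1; rw [upd4_a]
      by_cases h3 : y = c
      · subst h3; rw [upd4_c hac hbc]
      by_cases h4 : y = d
      · subst h4; rw [upd4_d had hbd hcd]
      · exact agreeK _ _ _ _ y hy h1 hyb h3 h4
  have R2 : Rewire Γ (upd4 lk a b c d (lk a) (lk d) (lk c) (lk d))
      (upd4 lk a b c d (lk a) (lk d) (lk c) (lk a)) := by
    refine ⟨C1, C2, d, hd, ?_, ?_⟩
    · rw [upd4_d had hbd hcd, upd4_d had hbd hcd]; exact Ne.symm hADg
    · intro y hy hyd
      by_cases h1 : y = a
      · subst h1; rw [upd4_a, upd4_a]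
      by_cases h2 : y = b
      · subst h2; rw [upd4_b hab, upd4_b hab]
      by_cases h3 : y = c
      · subst h3; rw [upd4_c hac hbc, upd4_c hac hbc]
      · rw [upd4_other h1 h2 h3 hyd, upd4_other h1 h2 h3 hyd]
  have R3 : Rewire Γ (upd4 lk a b c d (lk a) (lk d) (lk c) (lk a))
      (upd4 lk a b c d (lk b) (lk d) (lk c) (lk a)) := by
    refine ⟨C2, C3, a, ha, ?_, ?_⟩
    · rw [upd4_a, upd4_a]; exact hAB
    · intro y hy hya
      by_cases h2 : y = b
      · subst h2; rw [upd4_b hab, upd4_b hab]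
      by_cases h3 : y = c
      · subst h3; rw [upd4_c hac hbc, upd4_c hac hbc]
      by_cases h4 : y = d
      · subst h4; rw [upd4_d had hbd hcd, upd4_d had hbd hcd]
      · rw [upd4_other hya h2 h3 h4, upd4_other hya h2 h3 h4]
  have R4 : Rewire Γ (upd4 lk a b c d (lk b) (lk d) (lk c) (lk a))
      (upd4 lk a b c d (lk b) (lk d) (lk d) (lk a)) := by
    refine ⟨C3, C4, c, hc, ?_, ?_⟩
    · rw [upd4_c hac hbc, upd4_c hac hbc]; exact hCD
    · intro y hy hyc
      by_cases h1 : y = a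
      · subst h1; rw [upd4_a, upd4_a]
      by_cases h2 : y = b
      · subst h2; rw [upd4_b hab, upd4_b hab]
      by_cases h4 : y = d
      · subst h4; rw [upd4_d had hbd hcd, upd4_d had hbd hcd]
      · rw [upd4_other h1 h2 hyc h4, upd4_other h1 h2 hyc h4]
  have R5 : Rewire Γ (upd4 lk a b c d (lk b) (lk d) (lk d) (lk a))
      (upd4 lk a b c d (lk b) (lk a) (lk d) (lk a)) := by
    refine ⟨C4, C5, b, hb, ?_, ?_⟩
    · rw [upd4_b hab, upd4_b hab]; exact Ne.symm hADg
    · intro y hy hyb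
      by_cases h1 : y = a
      · subst h1; rw [upd4_a, upd4_a]
      by_cases h3 : y = c
      · subst h3; rw [upd4_c hac hbc, upd4_c hac hbc]
      by_cases h4 : y = d
      · subst h4; rw [upd4_d had hbd hcd, upd4_d had hbd hcd]
      · rw [upd4_other h1 hyb h3 h4, upd4_other h1 hyb h3 h4]
  have R6 : Rewire Γ (upd4 lk a b c d (lk b) (lk a) (lk d) (lk a))
      (upd4 lk a b c d (lk b) (lk a) (lk d) (lk c)) := by
    refine ⟨C5, C6, d, hd, ?_, ?_⟩
    · rw [upd4_d had hbd hcd, upd4_d had hbd hcd]; exact hAC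
    · intro y hy hyd
      by_cases h1 : y = a
      · subst h1; rw [upd4_a, upd4_a]
      by_cases h2 : y = b
      · subst h2; rw [upd4_b hab, upd4_b hab]
      by_cases h3 : y = c
      · subst h3; rw [upd4_c hac hbc, upd4_c hac hbc]
      · rw [upd4_other h1 h2 h3 hyd, upd4_other h1 h2 h3 hyd]
  exact Relation.EqvGen.trans _ _ _ (Relation.EqvGen.rel _ _ (Or.inr R1))
    (Relation.EqvGen.trans _ _ _ (Relation.EqvGen.rel _ _ (Or.inr R2))
    (Relation.EqvGen.trans _ _ _ (Relation.EqvGen.rel _ _ (Or.inr R3))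
    (Relation.EqvGen.trans _ _ _ (Relation.EqvGen.rel _ _ (Or.inr R4))
    (Relation.EqvGen.trans _ _ _ (Relation.EqvGen.rel _ _ (Or.inr R5))
    (Relation.EqvGen.rel _ _ (Or.inr R6))))))

open MLL SimpleGraph in
/-- Double exchange of jumps (Lemma 4.16 of the paper).  If every
switching graph of the proof net `(Γ, λ)` contains a path of the form
`λ(a) –jump– a – ⋯ – b –jump– λ(b) – ⋯ – λ(c) –jump– c – ⋯ – d –jump– λ(d)`,
then `λ` is equivalent to the linking obtained by simultaneously swapping the
targets of `a` and `b` and the targets of `c` and `d`. -/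
theorem mll_double_exchange {Γ : Sequent} (hW : WellNamed Γ)
    (lk : Linking) (hC : Correct Γ lk) (hOnes : TargetsOnes Γ lk)
    {a b c d : ℕ} (ha : IsBotName Γ a) (hb : IsBotName Γ b)
    (hc : IsBotName Γ c) (hd : IsBotName Γ d)
    (hpath : ∀ σ : Switching,
      ∃ (h₁ : (switchGraph Γ lk σ).Adj (lk a) a)
        (p₁ : (switchGraph Γ lk σ).Walk a b)
        (h₂ : (switchGraph Γ lk σ).Adj b (lk b))
        (p₂ : (switchGraph Γ lk σ).Walk (lk b) (lk c))
        (h₃ : (switchGraph Γ lk σ).Adj (lk c) c)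
        (p₃ : (switchGraph Γ lk σ).Walk c d)
        (h₄ : (switchGraph Γ lk σ).Adj d (lk d)),
        (Walk.cons h₁ (p₁.append (Walk.cons h₂ (p₂.append (Walk.cons h₃
          (p₃.append (Walk.cons h₄ Walk.nil))))))).IsPath) :
    NetEquiv Γ lk (fun x =>
      if x = a then lk b else if x = b then lk a else
      if x = c then lk d else if x = d then lk c else lk x) := by
  exact mll_double_exchange' hW lk hC hOnes ha hb hc hd hpath
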